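/- For a k-outcome POVM A on ℂ^d, the noise content equals the sum of the smallest eigenvalues of the effects: w(A) = Σ_{i=1}^k λ_min(A_i), where w(A) is the supremum of t ∈ [0,1] such that A = tT + (1-t)B for some trivial POVM T (T_i = p_i I for a probability vector p) and some POVM B with the same outcome set. -/

import Mathlib

open Matrix BigOperators
open scoped ComplexOrder

noncomputable def minEig {d : ℕ} (M : Matrix (Fin d) (Fin d) ℂ) : ℝ :=
  if h : M.IsHermitian then ⨅ j, h.eigenvalues j else 0

lemma smul_psd {d : ℕ} {M : Matrix (Fin d) (Fin d) ℂ} (hM : M.PosSemidef)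
    {c : ℝ} (hc : 0 ≤ c) : ((c : ℂ) • M).PosSemidef := by
  refine Matrix.PosSemidef.of_dotProduct_mulVec_nonneg ?_ ?_
  · unfold Matrix.IsHermitian
    rw [conjTranspose_smul, hM.1.eq]
    congr 1
    simp [Complex.conj_ofReal]
  · intro x
    rw [smul_mulVec, dotProduct_smul, smul_eq_mul]
    exact mul_nonneg (Complex.zero_le_real.mpr hc) (hM.dotProduct_mulVec_nonneg x)

lemma herm_sub_smul_psd {d : ℕ} {M : Matrix (Fin d) (Fin d) ℂ} (hM : M.IsHermitian)
    {c : ℝ} (hc : ∀ j, c ≤ hM.eigenvalues j) :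
    (M - (c : ℂ) • 1).PosSemidef := by
  have hU : (hM.eigenvectorUnitary : Matrix (Fin d) (Fin d) ℂ) *
      (star hM.eigenvectorUnitary : Matrix (Fin d) (Fin d) ℂ) = 1 :=
    (Matrix.mem_unitaryGroup_iff).mp hM.eigenvectorUnitary.2
  have key : M - (c : ℂ) • 1 =
      (hM.eigenvectorUnitary : Matrix (Fin d) (Fin d) ℂ) *
        diagonal (fun j => ((hM.eigenvalues j - c : ℝ) : ℂ)) *
        ((hM.eigenvectorUnitary : Matrix (Fin d) (Fin d) ℂ))ᴴ := by
    rw [← Matrix.star_eq_conjTranspose]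
    conv_lhs => rw [hM.spectral_theorem]
    rw [Unitary.conjStarAlgAut_apply]
    have h1 : (c : ℂ) • (1 : Matrix (Fin d) (Fin d) ℂ) =
        (hM.eigenvectorUnitary : Matrix (Fin d) (Fin d) ℂ) *
          diagonal (fun _ => (c : ℂ)) *
          (star hM.eigenvectorUnitary : Matrix (Fin d) (Fin d) ℂ) := by
      rw [← Matrix.smul_one_eq_diagonal, Matrix.mul_smul, Matrix.smul_mul, mul_one, hU]
    rw [h1, ← Matrix.sub_mul, ← Matrix.mul_sub, diagonal_sub]
    push_cast
    rfl
  rw [key]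
  exact (Matrix.PosSemidef.diagonal fun j => Complex.zero_le_real.mpr
    (sub_nonneg.mpr (hc j))).mul_mul_conjTranspose_same _

lemma psd_diag_entry {d : ℕ} {M : Matrix (Fin d) (Fin d) ℂ} (hM : M.PosSemidef)
    (j : Fin d) : 0 ≤ M j j := by
  have h := hM.dotProduct_mulVec_nonneg (Pi.single j 1)
  simpa [Matrix.mulVec_single, dotProduct, Pi.single_apply, apply_ite] using h

lemma eig_ge {d : ℕ} {M N : Matrix (Fin d) (Fin d) ℂ} (hM : M.IsHermitian) {c : ℝ}
    (hN : N.PosSemidef) (hMN : M = (c : ℂ) • 1 + N) (j : Fin d) :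
    c ≤ hM.eigenvalues j := by
  set v : Fin d → ℂ := ⇑(hM.eigenvectorBasis j) with hv
  have hvv : star v ⬝ᵥ v = 1 := by
    have h := hM.eigenvectorBasis.orthonormal.1 j
    have : (inner ℂ (hM.eigenvectorBasis j) (hM.eigenvectorBasis j) : ℂ) = star v ⬝ᵥ v :=
      (EuclideanSpace.inner_eq_star_dotProduct _ _).trans (dotProduct_comm _ _)
    rw [inner_self_eq_norm_sq_to_K, h] at this
    simpa using this.symm
  have h1 : star v ⬝ᵥ (M *ᵥ v) = (hM.eigenvalues j : ℂ) := by
    rw [hM.mulVec_eigenvectorBasis j, RCLike.real_smul_eq_coe_smul (K := ℂ),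
      dotProduct_smul, hvv, smul_eq_mul, mul_one]
    norm_cast
  have h2 : star v ⬝ᵥ (M *ᵥ v) = (c : ℂ) + star v ⬝ᵥ (N *ᵥ v) := by
    rw [hMN, add_mulVec, dotProduct_add, smul_mulVec, one_mulVec,
      dotProduct_smul, hvv, smul_eq_mul, mul_one]
  have h3 : 0 ≤ star v ⬝ᵥ (N *ᵥ v) := hN.dotProduct_mulVec_nonneg v
  have h4 : (c : ℂ) ≤ (hM.eigenvalues j : ℂ) := by
    rw [h2] at h1
    calc (c : ℂ) ≤ (c : ℂ) + star v ⬝ᵥ (N *ᵥ v) := le_add_of_nonneg_right h3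
    _ = _ := h1
  exact_mod_cast h4

lemma sum_mulVec' {d k : ℕ} (C : Fin k → Matrix (Fin d) (Fin d) ℂ) (x : Fin d → ℂ) :
    (∑ i, C i) *ᵥ x = ∑ i, C i *ᵥ x :=
  map_sum (AddMonoidHom.mk' (fun M : Matrix (Fin d) (Fin d) ℂ => M *ᵥ x)
    (fun a b => Matrix.add_mulVec a b x)) C Finset.univ

lemma dotProduct_sum' {d k : ℕ} (x : Fin d → ℂ) (v : Fin k → (Fin d → ℂ)) :
    x ⬝ᵥ (∑ i, v i) = ∑ i, x ⬝ᵥ v i :=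
  map_sum (AddMonoidHom.mk' (fun w => x ⬝ᵥ w) (fun a b => dotProduct_add x a b)) v Finset.univ

lemma psd_sum_zero {d k : ℕ} {C : Fin k → Matrix (Fin d) (Fin d) ℂ}
    (hC : ∀ i, (C i).PosSemidef) (hsum : ∑ i, C i = 0) (i : Fin k) : C i = 0 := by
  have hvec : ∀ x : Fin d → ℂ, C i *ᵥ x = 0 := by
    intro x
    have hq : ∀ i' ∈ Finset.univ, (0:ℂ) ≤ star x ⬝ᵥ (C i' *ᵥ x) := fun i' _ => (hC i').dotProduct_mulVec_nonneg x
    have hs : ∑ i' : Fin k, star x ⬝ᵥ (C i' *ᵥ x) = 0 := by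
      rw [← dotProduct_sum', ← sum_mulVec', hsum, zero_mulVec, dotProduct_zero]
    have := (Finset.sum_eq_zero_iff_of_nonneg hq).mp hs i (Finset.mem_univ i)
    exact ((hC i).dotProduct_mulVec_zero_iff x).mp this
  ext a b
  have := congrFun (hvec (Pi.single b 1)) a
  simpa [Matrix.mulVec_single] using this

theorem noiseContent_eq_sum_minEig {d k : ℕ} (hd : 0 < d)
    (A : Fin k → Matrix (Fin d) (Fin d) ℂ)
    (hA : ∀ i, (A i).PosSemidef) (hAsum : ∑ i, A i = 1) :
    sSup {t : ℝ | t ∈ Set.Icc (0:ℝ) 1 ∧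
        ∃ p : Fin k → ℝ, (∀ i, 0 ≤ p i) ∧ (∑ i, p i = 1) ∧
        ∃ B : Fin k → Matrix (Fin d) (Fin d) ℂ,
          (∀ i, (B i).PosSemidef) ∧ (∑ i, B i = 1) ∧
          (∀ i, A i = (t : ℂ) • ((p i : ℂ) • (1 : Matrix (Fin d) (Fin d) ℂ))
                        + ((1 - t : ℝ) : ℂ) • B i)}
      = ∑ i, minEig (A i) := by
  haveI : NeZero d := ⟨hd.ne'⟩
  haveI : Nonempty (Fin d) := Fin.pos_iff_nonempty.mp hd
  set S : Set ℝ := {t : ℝ | t ∈ Set.Icc (0:ℝ) 1 ∧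
        ∃ p : Fin k → ℝ, (∀ i, 0 ≤ p i) ∧ (∑ i, p i = 1) ∧
        ∃ B : Fin k → Matrix (Fin d) (Fin d) ℂ,
          (∀ i, (B i).PosSemidef) ∧ (∑ i, B i = 1) ∧
          (∀ i, A i = (t : ℂ) • ((p i : ℂ) • (1 : Matrix (Fin d) (Fin d) ℂ))
                        + ((1 - t : ℝ) : ℂ) • B i)} with hS
  set lam : Fin k → ℝ := fun i => minEig (A i) with hlam
  have hmin : ∀ i, lam i = ⨅ j, ((hA i).1).eigenvalues j := by
    intro i
    show minEig (A i) = _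
    unfold minEig
    rw [dif_pos ((hA i).1)]
  have hlamle : ∀ i j, lam i ≤ ((hA i).1).eigenvalues j := by
    intro i j
    rw [hmin i]
    exact ciInf_le (Set.Finite.bddBelow (Set.finite_range _)) j
  have hlamnn : ∀ i, 0 ≤ lam i := by
    intro i
    obtain ⟨j, hj⟩ := exists_eq_ciInf_of_finite (f := ((hA i).1).eigenvalues)
    rw [hmin i, ← hj]
    exact (hA i).eigenvalues_nonneg j
  have hC : ∀ i, (A i - (lam i : ℂ) • 1).PosSemidef :=
    fun i => herm_sub_smul_psd (hA i).1 (hlamle i)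
  set w : ℝ := ∑ i, lam i with hw
  -- key sum identity
  have hCsum : ∑ i, (A i - (lam i : ℂ) • 1) = 1 - (w : ℂ) • 1 := by
    rw [Finset.sum_sub_distrib, hAsum, ← Finset.sum_smul, hw]
    push_cast
    rfl
  -- w ≤ 1
  have hk : 0 < k := by
    rcases Nat.eq_zero_or_pos k with hk0 | hk0
    · exfalso
      subst hk0
      have h := congrFun (congrFun hAsum ⟨0, hd⟩) ⟨0, hd⟩
      simp [Matrix.one_apply_eq] at h
    · exact hk0
  have hw1 : w ≤ 1 := by
    set j0 : Fin d := ⟨0, hd⟩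
    have hle : ∀ i, lam i ≤ (A i j0 j0).re := by
      intro i
      have h := psd_diag_entry (hC i) j0
      have h2 : (A i - (lam i : ℂ) • 1) j0 j0 = A i j0 j0 - (lam i : ℂ) := by
        simp [Matrix.sub_apply, Matrix.smul_apply, Matrix.one_apply_eq]
      rw [h2] at h
      have := (Complex.nonneg_iff.mp h).1
      simp at this
      linarith
    have hsum : ∑ i, (A i j0 j0).re = 1 := by
      have h := congrFun (congrFun hAsum j0) j0
      have h2 : (∑ i, A i) j0 j0 = ∑ i, A i j0 j0 := by
        simp [Matrix.sum_apply]
      rw [h2, Matrix.one_apply_eq] at h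
      have := congrArg Complex.re h
      simpa [Complex.re_sum] using this
    calc w = ∑ i, lam i := hw
    _ ≤ ∑ i, (A i j0 j0).re := Finset.sum_le_sum fun i _ => hle i
    _ = 1 := hsum
  have hwnn : 0 ≤ w := Finset.sum_nonneg fun i _ => hlamnn i
  -- 0 ∈ S
  have h0mem : (0:ℝ) ∈ S := by
    refine ⟨⟨le_refl 0, zero_le_one⟩, (Pi.single (⟨0, hk⟩ : Fin k) (1:ℝ) : Fin k → ℝ),
      ?_, ?_, A, hA, hAsum, ?_⟩
    · intro i
      classical
      by_cases h : i = ⟨0, hk⟩ <;> simp [Pi.single_apply, h]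
    · simp
    · intro i
      simp
  -- S bounded above
  have hbdd : BddAbove S := ⟨1, fun t ht => ht.1.2⟩
  -- upper bound: every t ∈ S satisfies t ≤ w
  have hub : ∀ t ∈ S, t ≤ w := by
    rintro t ⟨⟨ht0, ht1⟩, p, hp0, hp1, B, hB, hBsum, heq⟩
    have key : ∀ i, t * p i ≤ lam i := by
      intro i
      have hdecomp : A i = ((t * p i : ℝ) : ℂ) • 1 + ((1 - t : ℝ) : ℂ) • B i := by
        rw [heq i, smul_smul]
        push_cast
        ring_nf
      have hN : (((1 - t : ℝ) : ℂ) • B i).PosSemidef := smul_psd (hB i) (by linarith)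
      have := eig_ge (hA i).1 hN hdecomp
      rw [hmin i]
      exact le_ciInf this
    calc t = t * ∑ i, p i := by rw [hp1, mul_one]
    _ = ∑ i, t * p i := Finset.mul_sum _ _ _
    _ ≤ ∑ i, lam i := Finset.sum_le_sum fun i _ => key i
    _ = w := rfl
  -- w ∈ S
  have hwmem : w ∈ S := by
    rcases lt_or_eq_of_le hw1 with hwlt | hweq
    · rcases eq_or_lt_of_le hwnn with hw0 | hwpos
      · rw [← hw0]; exact h0mem
      · refine ⟨⟨hwnn, hw1⟩, fun i => lam i / w, ?_, ?_, 
          fun i => (((1 - w)⁻¹ : ℝ) : ℂ) • (A i - (lam i : ℂ) • 1), ?_, ?_, ?_⟩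
        · exact fun i => div_nonneg (hlamnn i) hwnn
        · rw [← Finset.sum_div, ← hw, div_self hwpos.ne']
        · exact fun i => smul_psd (hC i) (inv_nonneg.mpr (by linarith))
        · rw [← Finset.smul_sum, hCsum]
          have h1 : (1 : Matrix (Fin d) (Fin d) ℂ) - (w : ℂ) • 1 = ((1 - w : ℝ) : ℂ) • 1 := by
            push_cast
            rw [sub_smul, one_smul]
          rw [h1, smul_smul]
          have h2 : (((1 - w)⁻¹ : ℝ) : ℂ) * ((1 - w : ℝ) : ℂ) = 1 := by
            rw [← Complex.ofReal_mul, inv_mul_cancel₀ (by linarith : (1:ℝ) - w ≠ 0),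
              Complex.ofReal_one]
          rw [h2, one_smul]
        · intro i
          have e1 : (w : ℂ) • ((lam i / w : ℝ) : ℂ) • (1 : Matrix (Fin d) (Fin d) ℂ)
              = (lam i : ℂ) • 1 := by
            rw [smul_smul, ← Complex.ofReal_mul, mul_div_cancel₀ _ hwpos.ne']
          have e2 : ((1 - w : ℝ) : ℂ) • ((((1 - w)⁻¹ : ℝ) : ℂ) • (A i - (lam i : ℂ) • 1))
              = A i - (lam i : ℂ) • 1 := by
            rw [smul_smul, ← Complex.ofReal_mul,
              mul_inv_cancel₀ (by linarith : (1:ℝ) - w ≠ 0), Complex.ofReal_one, one_smul]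
          rw [e1, e2, add_sub_cancel]
    · -- w = 1 : each A i = lam i • 1
      have hCzero : ∀ i, A i - (lam i : ℂ) • 1 = 0 := by
        apply psd_sum_zero hC
        rw [hCsum, hweq]
        norm_num
      have hAi : ∀ i, A i = (lam i : ℂ) • 1 := fun i => by
        have := hCzero i; rwa [sub_eq_zero] at this
      have hlsum : ∑ i, lam i = 1 := by rw [← hw, hweq]
      refine ⟨⟨hwnn, hw1⟩, lam, hlamnn, hlsum,
        fun i => (lam i : ℂ) • 1, fun i => smul_psd Matrix.PosSemidef.one (hlamnn i), ?_, ?_⟩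
      · rw [← Finset.sum_smul]
        have : ∑ i, ((lam i : ℂ)) = ((∑ i, lam i : ℝ) : ℂ) := by push_cast; rfl
        rw [this, hlsum, Complex.ofReal_one, one_smul]
      · intro i
        rw [hAi i, hweq]
        push_cast
        simp
  exact le_antisymm (csSup_le ⟨0, h0mem⟩ hub) (le_csSup hbdd hwmem)
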